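/- arXiv:2504.07306 — 5 statements merged into one kernel-verified Lean document; each statement's English description precedes it below -/
import Mathlib

section
/- If (sigma, tau) is a good pair of permutations of {1,...,n}, then (w_0 sigma w_0, w_0 tau w_0) is also a good pair, where w_0 is the longest permutation. -/
open Finset

/-- The `j`-th entry of the Lehmer code of `w`: the number of `k > j` with `w k < w j`. -/
def LC {n : ℕ} (w : Equiv.Perm (Fin n)) (j : Fin n) : ℕ :=
  (Finset.univ.filter (fun k => j < k ∧ w k < w j)).card

/-- `L'_j(w) = L_j(w⁻¹)`. -/
def LC' {n : ℕ} (w : Equiv.Perm (Fin n)) (j : Fin n) : ℕ := LC w⁻¹ j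

/-- The longest permutation `w₀` (zero-based: `i ↦ i.rev = n - 1 - i`). -/
def w0 {n : ℕ} : Equiv.Perm (Fin n) := ⟨Fin.rev, Fin.rev, Fin.rev_rev, Fin.rev_rev⟩

/-- `(σ, τ)` is a good pair: `L_j(σ) ≥ L_j(τ)` and `L'_{σ(j)}(σ) ≥ L'_{τ(j)}(τ)` for all `j`. -/
def GoodPair {n : ℕ} (σ τ : Equiv.Perm (Fin n)) : Prop :=
  ∀ j : Fin n, LC τ j ≤ LC σ j ∧ LC' τ (τ j) ≤ LC' σ (σ j)

lemma w0_apply {n : ℕ} (j : Fin n) : (w0 : Equiv.Perm (Fin n)) j = j.rev := rfl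

lemma w0_inv {n : ℕ} : (w0 : Equiv.Perm (Fin n))⁻¹ = w0 := rfl

lemma LC_conj {n : ℕ} (w : Equiv.Perm (Fin n)) (j : Fin n) :
    LC (w0 * w * w0) j = LC' w (w j.rev) := by
  unfold LC LC'
  apply Finset.card_bij' (fun k _ => w k.rev) (fun k _ => (w⁻¹ k).rev)
  · intro k hk
    simp only [mem_filter, mem_univ, true_and] at hk ⊢
    simp only [Equiv.Perm.mul_apply, w0_apply, Fin.rev_lt_rev] at hk
    refine ⟨hk.2, ?_⟩
    simp only [Equiv.Perm.inv_def, Equiv.symm_apply_apply, Fin.rev_lt_rev]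
    exact hk.1
  · intro k hk
    simp only [mem_filter, mem_univ, true_and] at hk ⊢
    simp only [Equiv.Perm.mul_apply, w0_apply, Fin.rev_lt_rev, Fin.rev_rev,
      Equiv.Perm.inv_def, Equiv.apply_symm_apply]
    refine ⟨?_, hk.1⟩
    rw [← Fin.rev_lt_rev, Fin.rev_rev]
    simpa using hk.2
  · intro k _; simp [Fin.rev_rev]
  · intro k _; simp [Fin.rev_rev]

lemma LC'_conj {n : ℕ} (w : Equiv.Perm (Fin n)) (j : Fin n) :
    LC' (w0 * w * w0) ((w0 * w * w0 : Equiv.Perm (Fin n)) j) = LC w j.rev := by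
  have h1 : (w0 * w * w0 : Equiv.Perm (Fin n))⁻¹ = w0 * w⁻¹ * w0 := by
    simp [mul_assoc, w0_inv, mul_inv_rev]
  have h2 : (w0 * w * w0 : Equiv.Perm (Fin n)) j = (w (j.rev)).rev := rfl
  unfold LC'
  rw [h1, h2, LC_conj w⁻¹ ((w (j.rev)).rev)]
  unfold LC'
  simp [Fin.rev_rev]

theorem good_pair_conj_w0 {n : ℕ} (σ τ : Equiv.Perm (Fin n))
    (h : GoodPair σ τ) : GoodPair (w0 * σ * w0) (w0 * τ * w0) := by
  intro j
  constructor
  · rw [LC_conj, LC_conj]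
    exact (h j.rev).2
  · rw [LC'_conj, LC'_conj]
    exact (h j.rev).1
end

section
/- Let sigma be a permutation of {1,...,n} with sigma^{-1}(i) < sigma^{-1}(i+1) for some i in {1,...,n-1}, and set sigma' = s_i sigma (where s_i is the transposition of i and i+1, acting by left multiplication, i.e., swapping the values i and i+1 in the one-line notation of sigma). Then L_j(sigma') >= L_j(sigma) for all j in {1,...,n}. -/
open Finset

theorem lehmer_mono_swap {n : ℕ} (σ : Equiv.Perm (Fin (n + 1))) (i : Fin n)
    (h : σ⁻¹ i.castSucc < σ⁻¹ i.succ) (j : Fin (n + 1)) :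
    LC σ j ≤ LC (Equiv.swap i.castSucc i.succ * σ) j := by
  apply Finset.card_le_card
  intro k hk
  simp only [Finset.mem_filter, Finset.mem_univ, true_and, Equiv.Perm.mul_apply] at hk
  obtain ⟨hjk, hlt⟩ := hk
  refine Finset.mem_filter.mpr ⟨Finset.mem_univ _, hjk, ?_⟩
  show (Equiv.swap i.castSucc i.succ) (σ k) < (Equiv.swap i.castSucc i.succ) (σ j)
  have hne : i.castSucc ≠ i.succ := (Fin.castSucc_lt_succ : i.castSucc < i.succ).ne
  -- the key excluded case: σ k = i, σ j = i+1 would force k < j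
  have key : ¬ (σ k = i.castSucc ∧ σ j = i.succ) := by
    rintro ⟨h1, h2⟩
    have hk' : k = σ⁻¹ i.castSucc := by rw [← h1, Equiv.Perm.inv_def, Equiv.symm_apply_apply]
    have hj' : j = σ⁻¹ i.succ := by rw [← h2, Equiv.Perm.inv_def, Equiv.symm_apply_apply]
    rw [hk', hj'] at hjk
    exact absurd hjk (not_lt.mpr h.le)
  have hcs : (i.castSucc : Fin (n+1)).val = i.val := rfl
  have hsu : (i.succ : Fin (n+1)).val = i.val + 1 := rfl
  by_cases h1 : σ k = i.castSucc
  · rw [h1, Equiv.swap_apply_left]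
    have h2 : σ j ≠ i.succ := fun h2 => key ⟨h1, h2⟩
    have h3 : σ j ≠ i.castSucc := fun h3 => by
      rw [h1, h3] at hlt; exact lt_irrefl _ hlt
    rw [Equiv.swap_apply_of_ne_of_ne h3 h2]
    rw [h1] at hlt
    rw [Fin.lt_def] at hlt ⊢
    have h2' : (σ j).val ≠ i.val + 1 := fun hc => h2 (Fin.ext (by rw [hc, hsu]))
    omega
  · by_cases h2 : σ k = i.succ
    · rw [h2, Equiv.swap_apply_right]
      rw [h2] at hlt
      have h3 : σ j ≠ i.castSucc := fun h3 => by
        rw [h3] at hlt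
        exact absurd hlt (not_lt.mpr (Fin.castSucc_lt_succ : i.castSucc < i.succ).le)
      have h4 : σ j ≠ i.succ := fun h4 => by
        rw [h4] at hlt; exact lt_irrefl _ hlt
      rw [Equiv.swap_apply_of_ne_of_ne h3 h4]
      rw [Fin.lt_def] at hlt ⊢
      omega
    · rw [Equiv.swap_apply_of_ne_of_ne h1 h2]
      by_cases h3 : σ j = i.castSucc
      · rw [h3, Equiv.swap_apply_left]
        rw [h3] at hlt
        rw [Fin.lt_def] at hlt ⊢
        omega
      · by_cases h4 : σ j = i.succ
        · rw [h4, Equiv.swap_apply_right]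
          rw [h4] at hlt
          have h1' : (σ k).val ≠ i.val := fun hc => h1 (Fin.ext (by rw [hc, hcs]))
          rw [Fin.lt_def] at hlt ⊢
          omega
        · rw [Equiv.swap_apply_of_ne_of_ne h3 h4]
          exact hlt
end

section
/- Let sigma be a permutation of {1,...,n} with sigma^{-1}(i) < sigma^{-1}(i+1) for some i, and set sigma' = s_i sigma. If (sigma, tau) is a good pair of permutations with disjoint ascent sets, then (sigma', tau) is also a good pair with disjoint ascent sets. -/
open Finset

/-- The ascent set of a permutation of `Fin (n+1)`: those `i` with `w i < w (i+1)`. -/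
def Asc {n : ℕ} (w : Equiv.Perm (Fin (n + 1))) : Finset (Fin n) :=
  Finset.univ.filter (fun i => w i.castSucc < w i.succ)

/-- Swapping consecutive values preserves strict order, except on the designated pair. -/
lemma swap_lt_of_lt {m : ℕ} (c s x y : Fin m) (hcs : (c : ℕ) + 1 = (s : ℕ))
    (hxy : x < y) (hne : ¬(x = c ∧ y = s)) :
    Equiv.swap c s x < Equiv.swap c s y := by
  rcases eq_or_ne x c with heq | hxc
  · have hys : y ≠ s := fun e => hne ⟨heq, e⟩
    have hyc : y ≠ c := heq ▸ hxy.ne'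
    rw [heq, Equiv.swap_apply_left, Equiv.swap_apply_of_ne_of_ne hyc hys]
    simp only [Fin.lt_def, ne_eq, Fin.ext_iff] at *
    omega
  · rcases eq_or_ne x s with heq | hxs
    · have hys : y ≠ s := heq ▸ hxy.ne'
      have hyc : y ≠ c := by
        intro e
        rw [heq, e] at hxy
        simp only [Fin.lt_def] at hxy
        omega
      rw [heq, Equiv.swap_apply_right, Equiv.swap_apply_of_ne_of_ne hyc hys]
      simp only [Fin.lt_def, ne_eq, Fin.ext_iff] at *
      omega
    · rw [Equiv.swap_apply_of_ne_of_ne hxc hxs]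
      rcases eq_or_ne y c with heq | hyc
      · rw [heq, Equiv.swap_apply_left]
        simp only [Fin.lt_def, ne_eq, Fin.ext_iff] at *
        omega
      · rcases eq_or_ne y s with heq | hys
        · rw [heq, Equiv.swap_apply_right]
          simp only [Fin.lt_def, ne_eq, Fin.ext_iff] at *
          omega
        · rw [Equiv.swap_apply_of_ne_of_ne hyc hys]
          exact hxy

theorem good_pair_swap {n : ℕ} (σ τ : Equiv.Perm (Fin (n + 1))) (i : Fin n)
    (h : σ⁻¹ i.castSucc < σ⁻¹ i.succ)
    (hgp : GoodPair σ τ) (hasc : Asc σ ∩ Asc τ = ∅) :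
    GoodPair (Equiv.swap i.castSucc i.succ * σ) τ ∧
      Asc (Equiv.swap i.castSucc i.succ * σ) ∩ Asc τ = ∅ := by
  set c := i.castSucc with hc
  set s := i.succ with hs
  have hcs : (c : ℕ) + 1 = (s : ℕ) := by simp [hc, hs]
  have key : ∀ x y : Fin (n + 1), x < y → ¬(x = c ∧ y = s) →
      Equiv.swap c s x < Equiv.swap c s y := fun x y => swap_lt_of_lt c s x y hcs
  -- LC part
  have hLC : ∀ j, LC σ j ≤ LC (Equiv.swap c s * σ) j := by
    intro j
    apply Finset.card_le_card
    intro k hk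
    rw [Finset.mem_filter] at hk ⊢
    simp only [LC, Finset.mem_filter, Finset.mem_univ, true_and, Equiv.Perm.mul_apply] at *
    refine ⟨hk.1, key _ _ hk.2 ?_⟩
    rintro ⟨h1, h2⟩
    have hk1 : k = σ⁻¹ c := by rw [← h1]; simp
    have hj1 : j = σ⁻¹ s := by rw [← h2]; simp
    have := hk.1
    rw [hk1, hj1] at this
    exact absurd this (not_lt.2 h.le)
  -- LC' part
  have hLC' : ∀ j, LC' σ (σ j) ≤ LC' (Equiv.swap c s * σ) ((Equiv.swap c s * σ) j) := by
    intro j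
    simp only [LC', LC]
    apply Finset.card_le_card_of_injOn (fun k => Equiv.swap c s k)
    · intro k hk
      simp only [Finset.coe_filter, Set.mem_setOf_eq, Finset.mem_filter, Finset.mem_univ, true_and, Equiv.Perm.mul_apply,
        mul_inv_rev, Equiv.swap_inv, Equiv.Perm.inv_def, Equiv.symm_apply_apply,
        Equiv.swap_apply_self] at *
      constructor
      · refine key _ _ hk.1 ?_
        rintro ⟨h1, h2⟩
        have hj1 : j = σ⁻¹ c := by rw [← h1]; simp
        have := hk.2
        rw [h2, hj1] at this
        exact absurd this (not_lt.2 h.le)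
      · exact hk.2
    · exact (Equiv.injective _).injOn
  -- Ascent part
  have hsub : Asc (Equiv.swap c s * σ) ⊆ Asc σ := by
    intro p hp
    rw [Asc, Finset.mem_filter] at hp
    simp only [Asc, Finset.mem_filter, Finset.mem_univ, true_and,
      Equiv.Perm.mul_apply] at *
    by_contra hcon
    push_neg at hcon
    have hne : σ p.succ ≠ σ p.castSucc := fun e =>
      (Fin.castSucc_lt_succ (i := p)).ne (σ.injective e).symm
    have hlt : σ p.succ < σ p.castSucc := lt_of_le_of_ne hcon hne
    have hcontra : ¬(σ p.succ = c ∧ σ p.castSucc = s) := by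
      rintro ⟨h1, h2⟩
      have h1' : p.succ = σ⁻¹ c := by rw [← h1]; simp
      have h2' : p.castSucc = σ⁻¹ s := by rw [← h2]; simp
      rw [← h1', ← h2'] at h
      exact absurd h (not_lt.2 (Fin.castSucc_lt_succ (i := p)).le)
    exact absurd hp (not_lt.2 (key _ _ hlt hcontra).le)
  constructor
  · intro j
    exact ⟨(hgp j).1.trans (hLC j), (hgp j).2.trans (hLC' j)⟩
  · exact Finset.subset_empty.mp
      (hasc ▸ Finset.inter_subset_inter hsub (Finset.Subset.refl _))
end

section
/- For n >= 1, the number of pairs (sigma, tau) of permutations of {1,...,n} such that (sigma, tau) is a good pair and A(sigma) ∩ A(tau) = ∅ is at least n!. -/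
open Finset

/-- The ascent set of a permutation of `Fin n` (general `n`), as positions `i`
with `i + 1 < n` and `w i < w (i+1)`. -/
def AscN {n : ℕ} (w : Equiv.Perm (Fin n)) : Finset (Fin n) :=
  Finset.univ.filter (fun i => ∃ h : (i : ℕ) + 1 < n, w i < w ⟨(i : ℕ) + 1, h⟩)

lemma ascN_revPerm (n : ℕ) : AscN (Fin.revPerm : Equiv.Perm (Fin n)) = ∅ := by
  ext i
  simp only [AscN, mem_filter, mem_univ, true_and, notMem_empty, iff_false]
  rintro ⟨h, hlt⟩
  simp only [Fin.revPerm_apply] at hlt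
  rw [Fin.rev_lt_rev] at hlt
  exact absurd hlt (by simp [Fin.lt_def])

lemma LC_le_rev {n : ℕ} (τ : Equiv.Perm (Fin n)) (j : Fin n) :
    LC τ j ≤ LC (Fin.revPerm : Equiv.Perm (Fin n)) j := by
  apply Finset.card_le_card
  intro k hk
  simp only [mem_filter, mem_univ, true_and] at hk ⊢
  exact ⟨hk.1, by simpa using Fin.rev_lt_rev.mpr hk.1⟩

lemma LC'_le_j {n : ℕ} (τ : Equiv.Perm (Fin n)) (j : Fin n) :
    LC' τ (τ j) ≤ (j : ℕ) := by
  have : LC' τ (τ j) ≤ #(Iio j) := by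
    unfold LC' LC
    apply Finset.card_le_card_of_injOn (fun k => τ⁻¹ k)
    · intro k hk
      simp only [LC', LC, mem_coe, mem_filter, mem_univ, true_and] at hk
      simpa [Finset.mem_Iio] using hk.2
    · intro a _ b _ h
      exact (Equiv.injective τ⁻¹) h
  simpa using this

lemma LC'_rev {n : ℕ} (j : Fin n) :
    (j : ℕ) ≤ LC' (Fin.revPerm : Equiv.Perm (Fin n)) (Fin.revPerm j) := by
  have : #(Iio j) ≤ LC' (Fin.revPerm : Equiv.Perm (Fin n)) (Fin.revPerm j) := by
    unfold LC' LC
    apply Finset.card_le_card_of_injOn (fun k : Fin n => k.rev)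
    · intro k hk
      simp only [mem_coe, Finset.mem_Iio] at hk
      simp only [LC', LC, mem_coe, mem_filter, mem_univ, true_and]
      have h1 : (Fin.revPerm j : Fin n) < k.rev := by
        simpa using Fin.rev_lt_rev.mpr hk
      refine ⟨h1, ?_⟩
      have hrp : (Fin.revPerm : Equiv.Perm (Fin n))⁻¹ = Fin.revPerm := rfl
      simpa [hrp] using hk
    · intro a _ b _ h
      exact Fin.rev_injective h
  simpa using this

lemma good_rev {n : ℕ} (τ : Equiv.Perm (Fin n)) :
    GoodPair (Fin.revPerm : Equiv.Perm (Fin n)) τ := by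
  intro j
  refine ⟨LC_le_rev τ j, le_trans (LC'_le_j τ j) (LC'_rev j)⟩

theorem factorial_le_good_falling_pairs (n : ℕ) (hn : 1 ≤ n) :
    n.factorial ≤
      {p : Equiv.Perm (Fin n) × Equiv.Perm (Fin n) |
        GoodPair p.1 p.2 ∧ AscN p.1 ∩ AscN p.2 = ∅}.ncard := by
  classical
  set S := {p : Equiv.Perm (Fin n) × Equiv.Perm (Fin n) |
        GoodPair p.1 p.2 ∧ AscN p.1 ∩ AscN p.2 = ∅}
  have hsub : Set.range (fun τ : Equiv.Perm (Fin n) =>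
      ((Fin.revPerm : Equiv.Perm (Fin n)), τ)) ⊆ S := by
    rintro p ⟨τ, rfl⟩
    exact ⟨good_rev τ, by simp [ascN_revPerm]⟩
  have hinj : Function.Injective (fun τ : Equiv.Perm (Fin n) =>
      ((Fin.revPerm : Equiv.Perm (Fin n)), τ)) := by
    intro a b h
    exact congrArg Prod.snd h
  have h1 : (Set.range (fun τ : Equiv.Perm (Fin n) =>
      ((Fin.revPerm : Equiv.Perm (Fin n)), τ))).ncard ≤ S.ncard :=
    Set.ncard_le_ncard hsub (Set.toFinite S)
  have h2 : (Set.range (fun τ : Equiv.Perm (Fin n) =>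
      ((Fin.revPerm : Equiv.Perm (Fin n)), τ))).ncard = n.factorial := by
    rw [← Set.image_univ, Set.ncard_image_of_injective _ hinj, Set.ncard_univ,
      Nat.card_eq_fintype_card, Fintype.card_perm, Fintype.card_fin]
  omega
end

section
/- Fix n and i with 2 <= i <= n-1. The number of permutations u of {1,...,n} satisfying all three conditions: (1) u(n-i) < u(n-i+k) for some k >= 2, (2) u(n-i+1) > u(n-i+1-k) for some k >= 2, and (3) u(n-i) > u(n-i+1), equals n!/((n-i)(n-i+1)) + n!/(i(i+1)) + n!/(i(n-i)) + n!/2 - n!/i - n!/(n-i) - (i-1)!(n-1-i)!. -/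
open Finset Equiv Nat


private lemma card_maxSet {n : ℕ} (P : Finset (Fin n)) (a : Fin n) (ha : a ∈ P) :
    P.card * (univ.filter fun u : Perm (Fin n) => ∀ x ∈ P, x ≠ a → u x < u a).card
      = n ! := by
  classical
  have key : ∀ b ∈ P, ∀ c ∈ P,
      (univ.filter fun u : Perm (Fin n) => ∀ x ∈ P, x ≠ b → u x < u b).card
      = (univ.filter fun u : Perm (Fin n) => ∀ x ∈ P, x ≠ c → u x < u c).card := by
    intro b hb c hc
    rcases eq_or_ne b c with rfl | hbc
    · rfl
    apply Finset.card_bij' (fun u _ => u * Equiv.swap b c) (fun u _ => u * Equiv.swap b c)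
    · intro u hu
      simp only [mem_filter, mem_univ, true_and] at hu ⊢
      intro x hx hxc
      rcases eq_or_ne x b with rfl | hxb
      · simp only [Perm.mul_apply, Equiv.swap_apply_left, Equiv.swap_apply_right]
        exact hu c hc hbc.symm
      · simp only [Perm.mul_apply, Equiv.swap_apply_right,
          Equiv.swap_apply_of_ne_of_ne hxb hxc]
        exact hu x hx hxb
    · intro u hu
      simp only [mem_filter, mem_univ, true_and] at hu ⊢
      intro x hx hxb
      rcases eq_or_ne x c with rfl | hxc
      · simp only [Perm.mul_apply, Equiv.swap_apply_left, Equiv.swap_apply_right]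
        exact hu b hb hbc
      · simp only [Perm.mul_apply, Equiv.swap_apply_left,
          Equiv.swap_apply_of_ne_of_ne hxb hxc]
        exact hu x hx hxc
    · intro u _; simp [mul_assoc]
    · intro u _; simp [mul_assoc]
  have hex : ∀ u : Perm (Fin n), ∃ b ∈ P, ∀ x ∈ P, u x ≤ u b :=
    fun u => P.exists_max_image u ⟨a, ha⟩
  set g : Perm (Fin n) → Fin n := fun u => (hex u).choose with hg
  have hgP : ∀ u : Perm (Fin n), g u ∈ P := fun u => (hex u).choose_spec.1
  have hgmax : ∀ u : Perm (Fin n), ∀ x ∈ P, u x ≤ u (g u) :=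
    fun u => (hex u).choose_spec.2
  have hsum : (univ : Finset (Perm (Fin n))).card
      = ∑ b ∈ P, (univ.filter fun u => g u = b).card :=
    Finset.card_eq_sum_card_fiberwise (fun u _ => hgP u)
  have hfib : ∀ b ∈ P, (univ.filter fun u : Perm (Fin n) => g u = b)
      = (univ.filter fun u : Perm (Fin n) => ∀ x ∈ P, x ≠ b → u x < u b) := by
    intro b hb
    ext u
    simp only [mem_filter, mem_univ, true_and]
    constructor
    · rintro rfl
      intro x hx hxg
      exact lt_of_le_of_ne (hgmax u x hx) (fun h => hxg (u.injective h))
    · intro h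
      by_contra hne
      exact absurd (hgmax u b hb) (not_le.mpr (h (g u) (hgP u) hne))
  have : n ! = ∑ b ∈ P, (univ.filter fun u : Perm (Fin n) => ∀ x ∈ P, x ≠ a → u x < u a).card := by
    have huniv : (univ : Finset (Perm (Fin n))).card = n ! := by
      rw [Finset.card_univ, Fintype.card_perm, Fintype.card_fin]
    rw [← huniv, hsum]
    exact Finset.sum_congr rfl fun b hb => by rw [hfib b hb, key b hb a ha]
  rw [this, Finset.sum_const, smul_eq_mul]


private lemma card_minSet {n : ℕ} (P : Finset (Fin n)) (a : Fin n) (ha : a ∈ P) :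
    P.card * (univ.filter fun u : Perm (Fin n) => ∀ x ∈ P, x ≠ a → u a < u x).card
      = n ! := by
  classical
  have key : ∀ b ∈ P, ∀ c ∈ P,
      (univ.filter fun u : Perm (Fin n) => ∀ x ∈ P, x ≠ b → u b < u x).card
      = (univ.filter fun u : Perm (Fin n) => ∀ x ∈ P, x ≠ c → u c < u x).card := by
    intro b hb c hc
    rcases eq_or_ne b c with rfl | hbc
    · rfl
    apply Finset.card_bij' (fun u _ => u * Equiv.swap b c) (fun u _ => u * Equiv.swap b c)
    · intro u hu
      simp only [mem_filter, mem_univ, true_and] at hu ⊢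
      intro x hx hxc
      rcases eq_or_ne x b with rfl | hxb
      · simp only [Perm.mul_apply, Equiv.swap_apply_left, Equiv.swap_apply_right]
        exact hu c hc hbc.symm
      · simp only [Perm.mul_apply, Equiv.swap_apply_right,
          Equiv.swap_apply_of_ne_of_ne hxb hxc]
        exact hu x hx hxb
    · intro u hu
      simp only [mem_filter, mem_univ, true_and] at hu ⊢
      intro x hx hxb
      rcases eq_or_ne x c with rfl | hxc
      · simp only [Perm.mul_apply, Equiv.swap_apply_left, Equiv.swap_apply_right]
        exact hu b hb hbc
      · simp only [Perm.mul_apply, Equiv.swap_apply_left,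
          Equiv.swap_apply_of_ne_of_ne hxb hxc]
        exact hu x hx hxc
    · intro u _; simp [mul_assoc]
    · intro u _; simp [mul_assoc]
  have hex : ∀ u : Perm (Fin n), ∃ b ∈ P, ∀ x ∈ P, u b ≤ u x :=
    fun u => P.exists_min_image u ⟨a, ha⟩
  set g : Perm (Fin n) → Fin n := fun u => (hex u).choose with hg
  have hgP : ∀ u : Perm (Fin n), g u ∈ P := fun u => (hex u).choose_spec.1
  have hgmin : ∀ u : Perm (Fin n), ∀ x ∈ P, u (g u) ≤ u x :=
    fun u => (hex u).choose_spec.2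
  have hsum : (univ : Finset (Perm (Fin n))).card
      = ∑ b ∈ P, (univ.filter fun u => g u = b).card :=
    Finset.card_eq_sum_card_fiberwise (fun u _ => hgP u)
  have hfib : ∀ b ∈ P, (univ.filter fun u : Perm (Fin n) => g u = b)
      = (univ.filter fun u : Perm (Fin n) => ∀ x ∈ P, x ≠ b → u b < u x) := by
    intro b hb
    ext u
    simp only [mem_filter, mem_univ, true_and]
    constructor
    · rintro rfl
      intro x hx hxg
      exact lt_of_le_of_ne (hgmin u x hx) (fun h => hxg (u.injective h.symm))
    · intro h
      by_contra hne
      exact absurd (hgmin u b hb) (not_le.mpr (h (g u) (hgP u) hne))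
  have : n ! = ∑ b ∈ P, (univ.filter fun u : Perm (Fin n) => ∀ x ∈ P, x ≠ a → u a < u x).card := by
    have huniv : (univ : Finset (Perm (Fin n))).card = n ! := by
      rw [Finset.card_univ, Fintype.card_perm, Fintype.card_fin]
    rw [← huniv, hsum]
    exact Finset.sum_congr rfl fun b hb => by rw [hfib b hb, key b hb a ha]
  rw [this, Finset.sum_const, smul_eq_mul]


private lemma card_maxminSet {n : ℕ} (P Q : Finset (Fin n)) (a b : Fin n)
    (ha : a ∈ P) (hb : b ∈ Q) (hPQ : Disjoint P Q) :
    (P.card * Q.card) * (univ.filter fun u : Perm (Fin n) =>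
        (∀ x ∈ P, x ≠ a → u x < u a) ∧ (∀ y ∈ Q, y ≠ b → u b < u y)).card = n ! := by
  classical
  have hnP : ∀ {x : Fin n}, x ∈ P → x ∉ Q := fun hx => Finset.disjoint_left.mp hPQ hx
  have hnQ : ∀ {y : Fin n}, y ∈ Q → y ∉ P := fun hy => Finset.disjoint_right.mp hPQ hy
  have swapPQ : ∀ {x c d : Fin n}, x ∉ Q → c ∈ Q → d ∈ Q → Equiv.swap c d x = x := by
    intro x c d hx hc hd
    exact Equiv.swap_apply_of_ne_of_ne (fun h => hx (h ▸ hc)) (fun h => hx (h ▸ hd))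
  have swapQP : ∀ {x c d : Fin n}, x ∉ P → c ∈ P → d ∈ P → Equiv.swap c d x = x := by
    intro x c d hx hc hd
    exact Equiv.swap_apply_of_ne_of_ne (fun h => hx (h ▸ hc)) (fun h => hx (h ▸ hd))
  have key : ∀ p ∈ P, ∀ q ∈ Q,
      (univ.filter fun u : Perm (Fin n) =>
        (∀ x ∈ P, x ≠ p → u x < u p) ∧ (∀ y ∈ Q, y ≠ q → u q < u y)).card
      = (univ.filter fun u : Perm (Fin n) =>
        (∀ x ∈ P, x ≠ a → u x < u a) ∧ (∀ y ∈ Q, y ≠ b → u b < u y)).card := by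
    intro p hp q hq
    apply Finset.card_bij' (fun u _ => u * Equiv.swap p a * Equiv.swap q b)
      (fun u _ => u * Equiv.swap q b * Equiv.swap p a)
    · intro u hu
      simp only [mem_filter, mem_univ, true_and] at hu ⊢
      obtain ⟨h1, h2⟩ := hu
      have veval : ∀ x : Fin n, (u * Equiv.swap p a * Equiv.swap q b) x
          = u (Equiv.swap p a (Equiv.swap q b x)) := fun x => rfl
      have va : (u * Equiv.swap p a * Equiv.swap q b) a = u p := by
        rw [veval, swapPQ (hnP ha) hq hb, Equiv.swap_apply_right]
      have vb : (u * Equiv.swap p a * Equiv.swap q b) b = u q := by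
        rw [veval, Equiv.swap_apply_right, swapQP (hnQ hq) hp ha]
      constructor
      · intro x hx hxa
        rw [va, veval, swapPQ (hnP hx) hq hb]
        by_cases hxp : x = p
        · rw [hxp, Equiv.swap_apply_left]
          exact h1 a ha (fun h => hxa (h ▸ hxp))
        · rw [Equiv.swap_apply_of_ne_of_ne hxp hxa]
          exact h1 x hx hxp
      · intro y hy hyb
        rw [vb, veval]
        by_cases hyq : y = q
        · rw [hyq, Equiv.swap_apply_left, swapQP (hnQ hb) hp ha]
          exact h2 b hb (fun h => hyb (hyq.trans h.symm))
        · rw [Equiv.swap_apply_of_ne_of_ne hyq hyb, swapQP (hnQ hy) hp ha]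
          exact h2 y hy hyq
    · intro u hu
      simp only [mem_filter, mem_univ, true_and] at hu ⊢
      obtain ⟨h1, h2⟩ := hu
      have veval : ∀ x : Fin n, (u * Equiv.swap q b * Equiv.swap p a) x
          = u (Equiv.swap q b (Equiv.swap p a x)) := fun x => rfl
      have vp : (u * Equiv.swap q b * Equiv.swap p a) p = u a := by
        rw [veval, Equiv.swap_apply_left, swapPQ (hnP ha) hq hb]
      have vq : (u * Equiv.swap q b * Equiv.swap p a) q = u b := by
        rw [veval, swapQP (hnQ hq) hp ha, Equiv.swap_apply_left]
      constructor
      · intro x hx hxp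
        rw [vp, veval]
        by_cases hxa : x = a
        · rw [hxa, Equiv.swap_apply_right, swapPQ (hnP hp) hq hb]
          exact h1 p hp (fun h => hxp (hxa.trans h.symm))
        · rw [Equiv.swap_apply_of_ne_of_ne hxp hxa, swapPQ (hnP hx) hq hb]
          exact h1 x hx hxa
      · intro y hy hyq
        rw [vq, veval, swapQP (hnQ hy) hp ha]
        by_cases hyb : y = b
        · rw [hyb, Equiv.swap_apply_right]
          exact h2 q hq (fun h => hyq (hyb.trans h.symm))
        · rw [Equiv.swap_apply_of_ne_of_ne hyq hyb]
          exact h2 y hy hyb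
    · intro u _; simp [mul_assoc]
    · intro u _; simp [mul_assoc]
  have hex : ∀ u : Perm (Fin n), ∃ p ∈ P, ∀ x ∈ P, u x ≤ u p :=
    fun u => P.exists_max_image u ⟨a, ha⟩
  have hex' : ∀ u : Perm (Fin n), ∃ q ∈ Q, ∀ y ∈ Q, u q ≤ u y :=
    fun u => Q.exists_min_image u ⟨b, hb⟩
  set g : Perm (Fin n) → Fin n × Fin n := fun u => ((hex u).choose, (hex' u).choose) with hg
  have hgP : ∀ u : Perm (Fin n), g u ∈ P ×ˢ Q := fun u =>
    Finset.mem_product.mpr ⟨(hex u).choose_spec.1, (hex' u).choose_spec.1⟩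
  have hsum : (univ : Finset (Perm (Fin n))).card
      = ∑ pq ∈ P ×ˢ Q, (univ.filter fun u => g u = pq).card :=
    Finset.card_eq_sum_card_fiberwise (fun u _ => hgP u)
  have hfib : ∀ pq ∈ P ×ˢ Q, (univ.filter fun u : Perm (Fin n) => g u = pq)
      = (univ.filter fun u : Perm (Fin n) =>
        (∀ x ∈ P, x ≠ pq.1 → u x < u pq.1) ∧ (∀ y ∈ Q, y ≠ pq.2 → u pq.2 < u y)) := by
    rintro ⟨p, q⟩ hpq
    rw [Finset.mem_product] at hpq
    ext u
    simp only [mem_filter, mem_univ, true_and, hg, Prod.mk.injEq]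
    constructor
    · rintro ⟨rfl, rfl⟩
      refine ⟨fun x hx hxp => ?_, fun y hy hyq => ?_⟩
      · exact lt_of_le_of_ne ((hex u).choose_spec.2 x hx) (fun h => hxp (u.injective h))
      · exact lt_of_le_of_ne ((hex' u).choose_spec.2 y hy) (fun h => hyq (u.injective h.symm))
    · rintro ⟨h1, h2⟩
      constructor
      · by_contra hne
        exact absurd ((hex u).choose_spec.2 p hpq.1)
          (not_le.mpr (h1 _ (hex u).choose_spec.1 hne))
      · by_contra hne
        exact absurd ((hex' u).choose_spec.2 q hpq.2)
          (not_le.mpr (h2 _ (hex' u).choose_spec.1 hne))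
  have hmain : n ! = ∑ _pq ∈ P ×ˢ Q, (univ.filter fun u : Perm (Fin n) =>
      (∀ x ∈ P, x ≠ a → u x < u a) ∧ (∀ y ∈ Q, y ≠ b → u b < u y)).card := by
    have huniv : (univ : Finset (Perm (Fin n))).card = n ! := by
      rw [Finset.card_univ, Fintype.card_perm, Fintype.card_fin]
    rw [← huniv, hsum]
    refine Finset.sum_congr rfl fun pq hpq => ?_
    rw [hfib pq hpq]
    obtain ⟨hp, hq⟩ := Finset.mem_product.mp hpq
    exact key pq.1 hp pq.2 hq
  rw [hmain, Finset.sum_const, smul_eq_mul, Finset.card_product]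


private lemma card_val_lt {n : ℕ} (c : ℕ) (h : c ≤ n) :
    (univ.filter fun v : Fin n => (v : ℕ) < c).card = c := by
  have heq : (univ.filter fun v : Fin n => (v : ℕ) < c)
      = (Finset.range c).attachFin (fun m hm => lt_of_lt_of_le (Finset.mem_range.mp hm) h) := by
    ext v
    simp [Finset.mem_attachFin]
  rw [heq, Finset.card_attachFin, Finset.card_range]

private lemma card_sandwich {n : ℕ} (s t : Finset (Fin n)) (a b : Fin n)
    (hab : a ≠ b) (has : a ∉ s) (hbs : b ∉ s) (hat : a ∉ t) (hbt : b ∉ t)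
    (hst : Disjoint s t) (hcover : ∀ x : Fin n, x ∈ s ∨ x ∈ t ∨ x = a ∨ x = b) :
    (univ.filter fun u : Perm (Fin n) =>
        (∀ x ∈ s, u x < u a) ∧ u a < u b ∧ (∀ y ∈ t, u b < u y)).card
      = s.card ! * t.card ! := by
  classical
  set k := s.card with hk
  have hcardn : n = k + t.card + 2 := by
    have hu : (s ∪ t) ∪ {a, b} = univ := by
      ext x
      simp only [mem_union, mem_insert, mem_singleton, mem_univ, iff_true]
      rcases hcover x with h | h | h | h
      · exact Or.inl (Or.inl h)
      · exact Or.inl (Or.inr h)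
      · exact Or.inr (Or.inl h)
      · exact Or.inr (Or.inr h)
    have h1 : Disjoint (s ∪ t) ({a, b} : Finset (Fin n)) := by
      simp only [Finset.disjoint_right, mem_insert, mem_singleton, mem_union]
      rintro x (rfl | rfl) <;> push_neg <;> exact ⟨by assumption, by assumption⟩
    have h2 : ({a, b} : Finset (Fin n)).card = 2 := by
      rw [card_insert_of_notMem (by simpa using hab), card_singleton]
    have := congrArg Finset.card hu
    rw [card_union_of_disjoint h1, card_union_of_disjoint hst, h2, Finset.card_univ,
      Fintype.card_fin] at this
    omega
  have hkn : k < n := by omega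
  have hk1n : k + 1 < n := by omega
  -- Step A : rewrite the filter via value conditions
  have hstep : (univ.filter fun u : Perm (Fin n) =>
        (∀ x ∈ s, u x < u a) ∧ u a < u b ∧ (∀ y ∈ t, u b < u y))
      = (univ.filter fun u : Perm (Fin n) =>
        ((u a : ℕ) = k ∧ (u b : ℕ) = k + 1) ∧
        (∀ x ∈ s, (u x : ℕ) < k) ∧ (∀ y ∈ t, k + 2 ≤ (u y : ℕ))) := by
    ext u
    simp only [mem_filter, mem_univ, true_and]
    constructor
    · rintro ⟨h1, h2, h3⟩
      have hSa : univ.filter (fun x => u x < u a) = s := by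
        ext x
        simp only [mem_filter, mem_univ, true_and]
        constructor
        · intro hx
          rcases hcover x with h | h | rfl | rfl
          · exact h
          · exact absurd hx (not_lt.mpr (le_of_lt (lt_trans h2 (h3 x h))))
          · exact absurd hx (lt_irrefl _)
          · exact absurd hx (not_lt.mpr (le_of_lt h2))
        · exact h1 x
      have hSb : univ.filter (fun x => u x < u b) = insert a s := by
        ext x
        simp only [mem_filter, mem_univ, true_and, mem_insert]
        constructor
        · intro hx
          rcases hcover x with h | h | rfl | rfl
          · exact Or.inr h
          · exact absurd hx (not_lt.mpr (le_of_lt (h3 x h)))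
          · exact Or.inl rfl
          · exact absurd hx (lt_irrefl _)
        · rintro (rfl | h)
          · exact h2
          · exact lt_trans (h1 x h) h2
      have hva : ∀ v : Fin n, (univ.filter (fun x => u x < v)).card = (v : ℕ) := by
        intro v
        have hbij : (univ.filter (fun x => u x < v)).card
            = (univ.filter fun w : Fin n => (w : ℕ) < (v : ℕ)).card := by
          apply Finset.card_bij' (fun x _ => u x) (fun w _ => u.symm w)
          · intro x hx
            simp only [mem_filter, mem_univ, true_and] at hx ⊢
            exact hx
          · intro w hw
            simp only [mem_filter, mem_univ, true_and] at hw ⊢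
            rw [u.apply_symm_apply]
            exact hw
          · intro x _; exact u.symm_apply_apply x
          · intro w _; exact u.apply_symm_apply w
        rw [hbij, card_val_lt _ (le_of_lt v.isLt)]
      refine ⟨⟨?_, ?_⟩, fun x hx => ?_, fun y hy => ?_⟩
      · rw [← hva (u a), hSa]
      · rw [← hva (u b), hSb, card_insert_of_notMem has]
      · have := h1 x hx
        have hval : (u x : ℕ) < (u a : ℕ) := this
        have : (u a : ℕ) = k := by rw [← hva (u a), hSa]
        omega
      · have hval : (u b : ℕ) < (u y : ℕ) := h3 y hy
        have : (u b : ℕ) = k + 1 := by rw [← hva (u b), hSb, card_insert_of_notMem has]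
        omega
    · rintro ⟨⟨hva, hvb⟩, hs', ht'⟩
      refine ⟨fun x hx => ?_, ?_, fun y hy => ?_⟩
      · have := hs' x hx
        exact Fin.lt_def.mpr (by omega)
      · exact Fin.lt_def.mpr (by omega)
      · have := ht' y hy
        exact Fin.lt_def.mpr (by omega)
  rw [hstep]
  -- Step B : bijection with pairs of embeddings
  set L : Finset (Fin n) := univ.filter (fun v : Fin n => (v : ℕ) < k) with hL
  set T : Finset (Fin n) := univ.filter (fun v : Fin n => k + 2 ≤ (v : ℕ)) with hT
  have hLcard : L.card = k := card_val_lt k (le_of_lt hkn)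
  have hTcard : T.card = t.card := by
    have h1 : (univ.filter fun v : Fin n => (v : ℕ) < k + 2).card = k + 2 :=
      card_val_lt (k + 2) (by omega)
    have h2 := Finset.card_filter_add_card_filter_not
      (s := (univ : Finset (Fin n))) (p := fun v : Fin n => (v : ℕ) < k + 2)
    rw [Finset.card_univ, Fintype.card_fin] at h2
    have h3 : T = univ.filter (fun v : Fin n => ¬ ((v : ℕ) < k + 2)) := by
      ext v; simp [hT, not_lt]
    rw [h3]
    omega
  
  have hLv : ∀ w : (L : Finset (Fin n)), ((w : Fin n) : ℕ) < k :=
    fun w => (mem_filter.mp w.2).2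
  have hTv : ∀ w : (T : Finset (Fin n)), k + 2 ≤ ((w : Fin n) : ℕ) :=
    fun w => (mem_filter.mp w.2).2
  have build : ∀ (f : ↥s ↪ ↥L) (g : ↥t ↪ ↥T), ∃ u : Perm (Fin n),
      (∀ x (hx : x ∈ s), u x = ((f ⟨x, hx⟩ : ↥L) : Fin n)) ∧
      (∀ y (hy : y ∈ t), u y = ((g ⟨y, hy⟩ : ↥T) : Fin n)) ∧
      u a = ⟨k, hkn⟩ ∧ u b = ⟨k + 1, hk1n⟩ := by
    intro f g
    set F : Fin n → Fin n := fun x =>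
      if hx : x ∈ s then ((f ⟨x, hx⟩ : ↥L) : Fin n)
      else if hx' : x ∈ t then ((g ⟨x, hx'⟩ : ↥T) : Fin n)
      else if x = a then ⟨k, hkn⟩ else ⟨k + 1, hk1n⟩ with hF
    have hFs : ∀ x (hx : x ∈ s), F x = ((f ⟨x, hx⟩ : ↥L) : Fin n) := by
      intro x hx; simp [hF, hx]
    have hFt : ∀ y (hy : y ∈ t), F y = ((g ⟨y, hy⟩ : ↥T) : Fin n) := by
      intro y hy
      have hys : y ∉ s := Finset.disjoint_right.mp hst hy
      simp [hF, hys, hy]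
    have hFa : F a = ⟨k, hkn⟩ := by simp [hF, has, hat]
    have hFb : F b = ⟨k + 1, hk1n⟩ := by simp [hF, hbs, hbt, Ne.symm hab]
    have hcls : ∀ x : Fin n, (x ∈ s ∧ (F x : ℕ) < k) ∨ (x ∈ t ∧ k + 2 ≤ (F x : ℕ))
        ∨ (x = a ∧ (F x : ℕ) = k) ∨ (x = b ∧ (F x : ℕ) = k + 1) := by
      intro x
      rcases hcover x with h | h | rfl | rfl
      · exact Or.inl ⟨h, by rw [hFs x h]; exact hLv _⟩
      · exact Or.inr (Or.inl ⟨h, by rw [hFt x h]; exact hTv _⟩)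
      · exact Or.inr (Or.inr (Or.inl ⟨rfl, by rw [hFa]⟩))
      · exact Or.inr (Or.inr (Or.inr ⟨rfl, by rw [hFb]⟩))
    have hinj : Function.Injective F := by
      intro x y hxy
      have hval : (F x : ℕ) = (F y : ℕ) := congrArg Fin.val hxy
      rcases hcls x with ⟨hx, hvx⟩ | ⟨hx, hvx⟩ | ⟨hxa, hvx⟩ | ⟨hxb, hvx⟩ <;>
        rcases hcls y with ⟨hy, hvy⟩ | ⟨hy, hvy⟩ | ⟨hya, hvy⟩ | ⟨hyb, hvy⟩
      all_goals first
        | omega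
        | (rw [hFs x hx, hFs y hy] at hxy
           exact congrArg Subtype.val (f.injective (Subtype.coe_injective hxy)))
        | (rw [hFt x hx, hFt y hy] at hxy
           exact congrArg Subtype.val (g.injective (Subtype.coe_injective hxy)))
        | exact hxa.trans hya.symm
        | exact hxb.trans hyb.symm
    have hbij : Function.Bijective F := Finite.injective_iff_bijective.mp hinj
    exact ⟨Equiv.ofBijective F hbij, hFs, hFt, hFa, hFb⟩
  have hcount : (univ.filter fun u : Perm (Fin n) =>
      ((u a : ℕ) = k ∧ (u b : ℕ) = k + 1) ∧
      (∀ x ∈ s, (u x : ℕ) < k) ∧ (∀ y ∈ t, k + 2 ≤ (u y : ℕ))).card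
      = (univ : Finset ((↥s ↪ ↥L) × (↥t ↪ ↥T))).card := by
    refine Finset.card_bij'
      (fun u hu =>
        (⟨fun x => ⟨u x, mem_filter.mpr ⟨mem_univ _, ((mem_filter.mp hu).2).2.1 x x.2⟩⟩,
          fun x y hxy => Subtype.ext (u.injective (congrArg Subtype.val hxy))⟩,
         ⟨fun y => ⟨u y, mem_filter.mpr ⟨mem_univ _, ((mem_filter.mp hu).2).2.2 y y.2⟩⟩,
          fun x y hxy => Subtype.ext (u.injective (congrArg Subtype.val hxy))⟩))
      (fun p _ => (build p.1 p.2).choose) ?_ ?_ ?_ ?_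
    · intro u hu; exact mem_univ _
    · intro p _
      obtain ⟨h1, h2, h3, h4⟩ := (build p.1 p.2).choose_spec
      refine mem_filter.mpr ⟨mem_univ _, ⟨⟨by rw [h3], by rw [h4]⟩,
        fun x hx => ?_, fun y hy => ?_⟩⟩
      · rw [h1 x hx]; exact hLv _
      · rw [h2 y hy]; exact hTv _
    · intro u hu
      obtain ⟨hm, ⟨hva, hvb⟩, hsm, htm⟩ := mem_filter.mp hu
      refine Equiv.ext fun x => ?_
      rcases hcover x with h | h | rfl | rfl
      · rw [(build _ _).choose_spec.1 x h]
        rfl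
      · rw [(build _ _).choose_spec.2.1 x h]
        rfl
      · rw [(build _ _).choose_spec.2.2.1]
        exact Fin.ext hva.symm
      · rw [(build _ _).choose_spec.2.2.2]
        exact Fin.ext hvb.symm
    · rintro ⟨f, g⟩ _
      refine Prod.ext ?_ ?_
      · apply Function.Embedding.ext
        intro x
        apply Subtype.ext
        exact (build f g).choose_spec.1 x.1 x.2
      · apply Function.Embedding.ext
        intro y
        apply Subtype.ext
        exact (build f g).choose_spec.2.1 y.1 y.2
  rw [hcount, Finset.card_univ, Fintype.card_prod, Fintype.card_embedding_eq,
    Fintype.card_embedding_eq, Fintype.card_coe, Fintype.card_coe, Fintype.card_coe,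
    Fintype.card_coe, hLcard, hTcard, ← hk, Nat.descFactorial_self, Nat.descFactorial_self]

private lemma filter_split {α : Type*} [Fintype α] (P Q : α → Prop)
    [DecidablePred P] [DecidablePred Q] :
    (univ.filter fun u => P u ∧ Q u).card + (univ.filter fun u => P u ∧ ¬ Q u).card
      = (univ.filter fun u => P u).card := by
  rw [← Finset.filter_filter, ← Finset.filter_filter]
  exact Finset.card_filter_add_card_filter_not _

private lemma dvd_fac_consec {a n : ℕ} (h1 : 1 ≤ a) (h2 : a + 1 ≤ n) :
    a * (a + 1) ∣ n ! := by
  have h3 : a * (a + 1) ∣ (a + 1)! := by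
    rw [Nat.factorial_succ]
    rw [mul_comm a (a+1)]
    exact mul_dvd_mul_left (a + 1) (Nat.dvd_factorial h1 le_rfl)
  exact dvd_trans h3 (Nat.factorial_dvd_factorial h2)

set_option maxHeartbeats 2000000 in
theorem count_ABC (n i : ℕ) (h2 : 2 ≤ i) (hn : i ≤ n - 1) :
    ({u : Equiv.Perm (Fin n) |
        (∃ q : Fin n, n - i + 1 ≤ (q : ℕ) ∧ u ⟨n - i - 1, by omega⟩ < u q) ∧
        (∃ q : Fin n, (q : ℕ) ≤ n - i - 2 ∧ u q < u ⟨n - i, by omega⟩) ∧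
        u ⟨n - i, by omega⟩ < u ⟨n - i - 1, by omega⟩}.ncard : ℤ) =
      (n.factorial / ((n - i) * (n - i + 1)) : ℕ) + (n.factorial / (i * (i + 1)) : ℕ) +
        (n.factorial / (i * (n - i)) : ℕ) + (n.factorial / 2 : ℕ) -
        (n.factorial / i : ℕ) - (n.factorial / (n - i) : ℕ) -
        ((i - 1).factorial * (n - 1 - i).factorial : ℕ) := by
  classical
  have hn3 : 3 ≤ n := by omega
  have ha0lt : n - i - 1 < n := by omega
  have hb0lt : n - i < n := by omega
  set a0 : Fin n := ⟨n - i - 1, ha0lt⟩ with ha0d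
  set b0 : Fin n := ⟨n - i, hb0lt⟩ with hb0d
  have ha0v : (a0 : ℕ) = n - i - 1 := rfl
  have hb0v : (b0 : ℕ) = n - i := rfl
  have hab : a0 ≠ b0 := by
    intro h
    have := congrArg Fin.val h
    rw [ha0v, hb0v] at this
    omega
  have hset : {u : Equiv.Perm (Fin n) |
        (∃ q : Fin n, n - i + 1 ≤ (q : ℕ) ∧ u ⟨n - i - 1, by omega⟩ < u q) ∧
        (∃ q : Fin n, (q : ℕ) ≤ n - i - 2 ∧ u q < u ⟨n - i, by omega⟩) ∧
        u ⟨n - i, by omega⟩ < u ⟨n - i - 1, by omega⟩}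
      = ↑(univ.filter (fun u : Perm (Fin n) =>
        (∃ q : Fin n, n - i + 1 ≤ (q : ℕ) ∧ u a0 < u q) ∧
        (∃ q : Fin n, (q : ℕ) ≤ n - i - 2 ∧ u q < u b0) ∧
        u b0 < u a0)) := by
    ext u
    simp only [Set.mem_setOf_eq, Finset.coe_filter, mem_univ, true_and]
    exact Iff.rfl
  rw [hset, Set.ncard_coe_finset]
  rcases eq_or_lt_of_le (show 1 ≤ n - i by omega) with hm1 | hm2
  · -- degenerate case : n - i = 1
    have hni : n - i = 1 := hm1.symm
    have hempty : (univ.filter (fun u : Perm (Fin n) =>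
        (∃ q : Fin n, n - i + 1 ≤ (q : ℕ) ∧ u a0 < u q) ∧
        (∃ q : Fin n, (q : ℕ) ≤ n - i - 2 ∧ u q < u b0) ∧
        u b0 < u a0)) = ∅ := by
      rw [Finset.filter_eq_empty_iff]
      rintro u -
      rintro ⟨-, ⟨q, hq, hlt⟩, hC⟩
      have hq0 : q = a0 := by
        apply Fin.ext
        rw [ha0v]
        omega
      rw [hq0] at hlt
      exact absurd hC (not_lt.mpr (le_of_lt hlt))
    rw [hempty, Finset.card_empty]
    have hnfac : n ! = (i * n) * (i - 1)! := by
      have h1 : n = (n - 1) + 1 := by omega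
      have h2 : n - 1 = i := by omega
      have h3 : i = (i - 1) + 1 := by omega
      calc n ! = ((n - 1) + 1)! := by rw [← h1]
        _ = ((n - 1) + 1) * (n - 1)! := Nat.factorial_succ _
        _ = n * i ! := by rw [← h1, h2]
        _ = (i * n) * (i - 1)! := by
            have h4 : i ! = i * (i - 1)! := by
              conv_lhs => rw [h3]
              rw [Nat.factorial_succ, ← h3]
            rw [h4]; ring
    obtain ⟨x, hx⟩ : 2 ∣ n ! := Nat.dvd_factorial (by omega) (by omega)
    obtain ⟨y, hy⟩ : i ∣ n ! := Nat.dvd_factorial (by omega) (by omega)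
    have e1 : n ! / ((n - i) * (n - i + 1)) = x := by
      rw [hni]
      norm_num
      rw [hx]
      exact Nat.mul_div_cancel_left x (by omega)
    have e2 : n ! / (i * (i + 1)) = (i - 1)! := by
      have : i + 1 = n := by omega
      rw [this, hnfac]
      exact Nat.mul_div_cancel_left _ (by positivity)
    have e3 : n ! / (i * (n - i)) = y := by
      rw [hni, mul_one, hy]
      exact Nat.mul_div_cancel_left y (by omega)
    have e4 : n ! / 2 = x := by
      rw [hx]; exact Nat.mul_div_cancel_left x (by omega)
    have e5 : n ! / i = y := by
      rw [hy]; exact Nat.mul_div_cancel_left y (by omega)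
    have e6 : n ! / (n - i) = n ! := by rw [hni, Nat.div_one]
    have e7 : n - 1 - i = 0 := by omega
    rw [e1, e2, e3, e4, e5, e6, e7]
    simp only [Nat.factorial_zero, mul_one]
    push_cast
    omega
  · -- main case : 2 ≤ n - i
    set m := n - i with hmdef
    have hnm : n = i + m := by omega
    set tail := univ.filter (fun q : Fin n => m + 1 ≤ (q : ℕ)) with htaild
    set front := univ.filter (fun q : Fin n => (q : ℕ) + 2 ≤ m) with hfrontd
    have htailmem : ∀ q : Fin n, q ∈ tail ↔ m + 1 ≤ (q : ℕ) := by
      intro q; simp [htaild]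
    have hfrontmem : ∀ q : Fin n, q ∈ front ↔ (q : ℕ) + 2 ≤ m := by
      intro q; simp [hfrontd]
    have ha0t : a0 ∉ tail := by rw [htailmem, ha0v]; omega
    have hb0t : b0 ∉ tail := by rw [htailmem, hb0v]; omega
    have ha0f : a0 ∉ front := by rw [hfrontmem, ha0v]; omega
    have hb0f : b0 ∉ front := by rw [hfrontmem, hb0v]; omega
    have htf : Disjoint tail front := by
      rw [Finset.disjoint_left]
      intro q hq1 hq2
      rw [htailmem] at hq1
      rw [hfrontmem] at hq2
      omega
    have hcover : ∀ x : Fin n, x ∈ tail ∨ x ∈ front ∨ x = a0 ∨ x = b0 := by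
      intro x
      have hxlt := x.isLt
      by_cases hx1 : m + 1 ≤ (x : ℕ)
      · exact Or.inl ((htailmem x).mpr hx1)
      by_cases hx2 : (x : ℕ) + 2 ≤ m
      · exact Or.inr (Or.inl ((hfrontmem x).mpr hx2))
      by_cases hx3 : (x : ℕ) = m - 1
      · refine Or.inr (Or.inr (Or.inl (Fin.ext ?_)))
        rw [ha0v]; omega
      · refine Or.inr (Or.inr (Or.inr (Fin.ext ?_)))
        rw [hb0v]; omega
    have htailcard : tail.card = i - 1 := by
      have h1 := Finset.card_filter_add_card_filter_not
        (s := (univ : Finset (Fin n))) (p := fun q : Fin n => (q : ℕ) < m + 1)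
      rw [Finset.card_univ, Fintype.card_fin] at h1
      have hcv : (univ.filter fun q : Fin n => (q : ℕ) < m + 1).card = m + 1 :=
        card_val_lt _ (by omega)
      have h3 : tail = univ.filter (fun q : Fin n => ¬ (q : ℕ) < m + 1) := by
        ext q
        rw [htailmem]
        simp only [mem_filter, mem_univ, true_and, not_lt]
      rw [h3]
      omega
    have hfrontcard : front.card = m - 1 := by
      have h3 : front = univ.filter (fun q : Fin n => (q : ℕ) < m - 1) := by
        ext q
        rw [hfrontmem]
        simp only [mem_filter, mem_univ, true_and]
        omega
      rw [h3, card_val_lt _ (by omega)]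
    -- the count |C|
    have hc0 := card_maxSet {a0, b0} a0 (Finset.mem_insert_self _ _)
    have hc0card : ({a0, b0} : Finset (Fin n)).card = 2 := by
      rw [Finset.card_insert_of_notMem (by simpa using hab), Finset.card_singleton]
    have hCeq : (univ.filter fun u : Perm (Fin n) =>
        ∀ x ∈ ({a0, b0} : Finset (Fin n)), x ≠ a0 → u x < u a0)
        = univ.filter (fun u : Perm (Fin n) => u b0 < u a0) := by
      ext u
      simp only [mem_filter, mem_univ, true_and, Finset.mem_insert, Finset.mem_singleton]
      constructor
      · intro h; exact h b0 (Or.inr rfl) (Ne.symm hab)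
      · rintro h x (rfl | rfl) hx
        · exact absurd rfl hx
        · exact h
    rw [hc0card, hCeq] at hc0
    -- the count |C ∩ A'|
    set P1 : Finset (Fin n) := insert a0 (insert b0 tail) with hP1d
    have hP1card : P1.card = i + 1 := by
      rw [hP1d, Finset.card_insert_of_notMem, Finset.card_insert_of_notMem hb0t, htailcard]
      · omega
      · simp only [Finset.mem_insert]
        push_neg
        exact ⟨hab, ha0t⟩
    have hc1 := card_maxSet P1 a0 (Finset.mem_insert_self _ _)
    rw [hP1card] at hc1
    -- the count |C ∩ B'|
    set P2 : Finset (Fin n) := insert b0 (insert a0 front) with hP2d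
    have hP2card : P2.card = m + 1 := by
      rw [hP2d, Finset.card_insert_of_notMem, Finset.card_insert_of_notMem ha0f, hfrontcard]
      · omega
      · simp only [Finset.mem_insert]
        push_neg
        exact ⟨Ne.symm hab, hb0f⟩
    have hc2 := card_minSet P2 b0 (Finset.mem_insert_self _ _)
    rw [hP2card] at hc2
    -- the count |D|
    set P3 : Finset (Fin n) := insert a0 tail with hP3d
    set Q3 : Finset (Fin n) := insert b0 front with hQ3d
    have hP3card : P3.card = i := by
      rw [hP3d, Finset.card_insert_of_notMem ha0t, htailcard]; omega
    have hQ3card : Q3.card = m := by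
      rw [hQ3d, Finset.card_insert_of_notMem hb0f, hfrontcard]; omega
    have hP3Q3 : Disjoint P3 Q3 := by
      rw [Finset.disjoint_left]
      intro x hx hy
      rw [hP3d, Finset.mem_insert] at hx
      rw [hQ3d, Finset.mem_insert] at hy
      rcases hx with hxa | hx <;> rcases hy with hyb | hy
      · exact hab (hxa.symm.trans hyb)
      · exact ha0f (hxa ▸ hy)
      · exact hb0t (hyb ▸ hx)
      · exact Finset.disjoint_left.mp htf hx hy
    have hd := card_maxminSet P3 Q3 a0 b0 (Finset.mem_insert_self _ _)
      (Finset.mem_insert_self _ _) hP3Q3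
    rw [hP3card, hQ3card] at hd
    -- the sandwich count
    have he := card_sandwich tail front a0 b0 hab ha0t hb0t ha0f hb0f htf hcover
    rw [htailcard, hfrontcard] at he
    -- filter identifications
    have q1 : (univ.filter fun u : Perm (Fin n) =>
          (∃ q : Fin n, m + 1 ≤ (q : ℕ) ∧ u a0 < u q) ∧
          (∃ q : Fin n, (q : ℕ) ≤ m - 2 ∧ u q < u b0) ∧ u b0 < u a0)
        = (univ.filter fun u : Perm (Fin n) =>
          (u b0 < u a0 ∧ (∃ q : Fin n, m + 1 ≤ (q : ℕ) ∧ u a0 < u q)) ∧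
          (∃ q : Fin n, (q : ℕ) ≤ m - 2 ∧ u q < u b0)) := by
      ext u
      simp only [mem_filter, mem_univ, true_and]
      tauto
    have q2 : (univ.filter fun u : Perm (Fin n) =>
          u b0 < u a0 ∧ ¬ (∃ q : Fin n, m + 1 ≤ (q : ℕ) ∧ u a0 < u q))
        = univ.filter (fun u : Perm (Fin n) => ∀ x ∈ P1, x ≠ a0 → u x < u a0) := by
      ext u
      simp only [mem_filter, mem_univ, true_and, not_exists, not_and, not_lt]
      constructor
      · rintro ⟨hC, hA⟩ x hx hxa
        rw [hP1d, Finset.mem_insert, Finset.mem_insert] at hx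
        rcases hx with hx | hx | hx
        · exact absurd hx hxa
        · rw [hx]; exact hC
        · have h1 : u x ≤ u a0 := hA x ((htailmem x).mp hx)
          exact lt_of_le_of_ne h1 (fun h' => hxa (u.injective h'))
      · intro h
        refine ⟨h b0 (by rw [hP1d]; simp) (Ne.symm hab), ?_⟩
        intro q hq
        have hqa : q ≠ a0 := by
          intro h'
          rw [h', ha0v] at hq
          omega
        exact le_of_lt (h q (by
          rw [hP1d, Finset.mem_insert, Finset.mem_insert]
          exact Or.inr (Or.inr ((htailmem q).mpr hq))) hqa)
    have q3 : (univ.filter fun u : Perm (Fin n) =>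
          u b0 < u a0 ∧ ¬ (∃ q : Fin n, (q : ℕ) ≤ m - 2 ∧ u q < u b0))
        = univ.filter (fun u : Perm (Fin n) => ∀ x ∈ P2, x ≠ b0 → u b0 < u x) := by
      ext u
      simp only [mem_filter, mem_univ, true_and, not_exists, not_and, not_lt]
      constructor
      · rintro ⟨hC, hB⟩ x hx hxb
        rw [hP2d, Finset.mem_insert, Finset.mem_insert] at hx
        rcases hx with hx | hx | hx
        · exact absurd hx hxb
        · rw [hx]; exact hC
        · have hxval := (hfrontmem x).mp hx
          have h1 : u b0 ≤ u x := hB x (by omega)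
          exact lt_of_le_of_ne h1 (fun h' => hxb (u.injective h'.symm))
      · intro h
        refine ⟨h a0 (by rw [hP2d]; simp [Finset.mem_insert]) hab, ?_⟩
        intro q hq
        have hqb : q ≠ b0 := by
          intro h'
          rw [h', hb0v] at hq
          omega
        exact le_of_lt (h q (by
          rw [hP2d, Finset.mem_insert, Finset.mem_insert]
          exact Or.inr (Or.inr ((hfrontmem q).mpr (by omega)))) hqb)
    have q6 : (univ.filter fun u : Perm (Fin n) =>
          (∀ x ∈ P3, x ≠ a0 → u x < u a0) ∧ (∀ y ∈ Q3, y ≠ b0 → u b0 < u y))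
        = univ.filter (fun u : Perm (Fin n) =>
          (∀ q ∈ tail, u q < u a0) ∧ (∀ q ∈ front, u b0 < u q)) := by
      ext u
      simp only [mem_filter, mem_univ, true_and]
      constructor
      · rintro ⟨hh1, hh2⟩
        refine ⟨fun q hq => ?_, fun q hq => ?_⟩
        · exact hh1 q (by rw [hP3d, Finset.mem_insert]; exact Or.inr hq)
            (fun h' => ha0t (h' ▸ hq))
        · exact hh2 q (by rw [hQ3d, Finset.mem_insert]; exact Or.inr hq)
            (fun h' => hb0f (h' ▸ hq))
      · rintro ⟨hh1, hh2⟩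
        refine ⟨fun x hx hxa => ?_, fun y hy hyb => ?_⟩
        · rw [hP3d, Finset.mem_insert] at hx
          rcases hx with hx | hx
          · exact absurd hx hxa
          · exact hh1 x hx
        · rw [hQ3d, Finset.mem_insert] at hy
          rcases hy with hy | hy
          · exact absurd hy hyb
          · exact hh2 y hy
    rw [q6] at hd
    have q4 : (univ.filter fun u : Perm (Fin n) =>
          (u b0 < u a0 ∧ ¬ (∃ q : Fin n, (q : ℕ) ≤ m - 2 ∧ u q < u b0)) ∧
          (∃ q : Fin n, m + 1 ≤ (q : ℕ) ∧ u a0 < u q))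
        = (univ.filter fun u : Perm (Fin n) =>
          (u b0 < u a0 ∧ (∃ q : Fin n, m + 1 ≤ (q : ℕ) ∧ u a0 < u q)) ∧
          ¬ (∃ q : Fin n, (q : ℕ) ≤ m - 2 ∧ u q < u b0)) := by
      ext u
      simp only [mem_filter, mem_univ, true_and]
      constructor <;> rintro ⟨⟨hh1, hh2⟩, hh3⟩ <;> exact ⟨⟨hh1, hh3⟩, hh2⟩
    have q5 : (univ.filter fun u : Perm (Fin n) =>
          (u b0 < u a0 ∧ ¬ (∃ q : Fin n, (q : ℕ) ≤ m - 2 ∧ u q < u b0)) ∧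
          ¬ (∃ q : Fin n, m + 1 ≤ (q : ℕ) ∧ u a0 < u q))
        = (univ.filter fun u : Perm (Fin n) =>
          ((∀ q ∈ tail, u q < u a0) ∧ (∀ q ∈ front, u b0 < u q)) ∧ u b0 < u a0) := by
      ext u
      simp only [mem_filter, mem_univ, true_and, not_exists, not_and, not_lt]
      constructor
      · rintro ⟨⟨hC, hB⟩, hA⟩
        refine ⟨⟨fun q hq => ?_, fun q hq => ?_⟩, hC⟩
        · have hqv := (htailmem q).mp hq
          have h1 : u q ≤ u a0 := hA q hqv
          refine lt_of_le_of_ne h1 (fun h' => ?_)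
          have : q = a0 := u.injective h'
          rw [this, ha0v] at hqv
          omega
        · have hqv := (hfrontmem q).mp hq
          have h1 : u b0 ≤ u q := hB q (by omega)
          refine lt_of_le_of_ne h1 (fun h' => ?_)
          have : b0 = q := u.injective h'
          rw [← this] at hqv
          rw [hb0v] at hqv
          omega
      · rintro ⟨⟨hT, hF⟩, hC⟩
        refine ⟨⟨hC, fun q hq => ?_⟩, fun q hq => ?_⟩
        · exact le_of_lt (hF q ((hfrontmem q).mpr (by omega)))
        · exact le_of_lt (hT q ((htailmem q).mpr hq))
    have q7 : (univ.filter fun u : Perm (Fin n) =>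
          ((∀ q ∈ tail, u q < u a0) ∧ (∀ q ∈ front, u b0 < u q)) ∧
          ¬ (u b0 < u a0))
        = (univ.filter fun u : Perm (Fin n) =>
          (∀ x ∈ tail, u x < u a0) ∧ u a0 < u b0 ∧ (∀ y ∈ front, u b0 < u y)) := by
      ext u
      simp only [mem_filter, mem_univ, true_and, not_lt]
      constructor
      · rintro ⟨⟨hT, hF⟩, hC⟩
        refine ⟨hT, lt_of_le_of_ne hC (fun h' => hab (u.injective h')), hF⟩
      · rintro ⟨hT, hC, hF⟩
        exact ⟨⟨hT, hF⟩, le_of_lt hC⟩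
    -- splitting chain
    have hA1 : (univ.filter fun u : Perm (Fin n) =>
          u b0 < u a0 ∧ (∃ q : Fin n, m + 1 ≤ (q : ℕ) ∧ u a0 < u q)).card
        + (univ.filter fun u : Perm (Fin n) =>
          u b0 < u a0 ∧ ¬ (∃ q : Fin n, m + 1 ≤ (q : ℕ) ∧ u a0 < u q)).card
        = (univ.filter fun u : Perm (Fin n) => u b0 < u a0).card := filter_split _ _
    rw [q2] at hA1
    have hA2 : (univ.filter fun u : Perm (Fin n) =>
          (u b0 < u a0 ∧ (∃ q : Fin n, m + 1 ≤ (q : ℕ) ∧ u a0 < u q)) ∧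
          (∃ q : Fin n, (q : ℕ) ≤ m - 2 ∧ u q < u b0)).card
        + (univ.filter fun u : Perm (Fin n) =>
          (u b0 < u a0 ∧ (∃ q : Fin n, m + 1 ≤ (q : ℕ) ∧ u a0 < u q)) ∧
          ¬ (∃ q : Fin n, (q : ℕ) ≤ m - 2 ∧ u q < u b0)).card
        = (univ.filter fun u : Perm (Fin n) =>
          u b0 < u a0 ∧ (∃ q : Fin n, m + 1 ≤ (q : ℕ) ∧ u a0 < u q)).card := filter_split _ _
    have hA3 : (univ.filter fun u : Perm (Fin n) =>
          (u b0 < u a0 ∧ ¬ (∃ q : Fin n, (q : ℕ) ≤ m - 2 ∧ u q < u b0)) ∧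
          (∃ q : Fin n, m + 1 ≤ (q : ℕ) ∧ u a0 < u q)).card
        + (univ.filter fun u : Perm (Fin n) =>
          (u b0 < u a0 ∧ ¬ (∃ q : Fin n, (q : ℕ) ≤ m - 2 ∧ u q < u b0)) ∧
          ¬ (∃ q : Fin n, m + 1 ≤ (q : ℕ) ∧ u a0 < u q)).card
        = (univ.filter fun u : Perm (Fin n) =>
          u b0 < u a0 ∧ ¬ (∃ q : Fin n, (q : ℕ) ≤ m - 2 ∧ u q < u b0)).card := filter_split _ _
    rw [q4, q5, q3] at hA3
    have hA4 : (univ.filter fun u : Perm (Fin n) =>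
          ((∀ q ∈ tail, u q < u a0) ∧ (∀ q ∈ front, u b0 < u q)) ∧ u b0 < u a0).card
        + (univ.filter fun u : Perm (Fin n) =>
          ((∀ q ∈ tail, u q < u a0) ∧ (∀ q ∈ front, u b0 < u q)) ∧ ¬ (u b0 < u a0)).card
        = (univ.filter fun u : Perm (Fin n) =>
          (∀ q ∈ tail, u q < u a0) ∧ (∀ q ∈ front, u b0 < u q)).card := filter_split _ _
    rw [q7, he] at hA4
    -- division facts
    obtain ⟨wm, hwm⟩ := dvd_fac_consec (show 1 ≤ m by omega) (show m + 1 ≤ n by omega)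
    obtain ⟨wi, hwi⟩ := dvd_fac_consec (show 1 ≤ i by omega) (show i + 1 ≤ n by omega)
    have r1 : n ! / (m * (m + 1)) = wm := by
      rw [hwm]; exact Nat.mul_div_cancel_left _ (Nat.mul_pos (by omega) (by omega))
    have r2 : n ! / (i * (i + 1)) = wi := by
      rw [hwi]; exact Nat.mul_div_cancel_left _ (Nat.mul_pos (by omega) (by omega))
    have r3 : n ! / (i * m) = (univ.filter (fun u : Perm (Fin n) =>
        (∀ q ∈ tail, u q < u a0) ∧ (∀ q ∈ front, u b0 < u q))).card := by
      rw [← hd]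
      exact Nat.mul_div_cancel_left _ (Nat.mul_pos (by omega) (by omega))
    have r4 : n ! / 2 = (univ.filter (fun u : Perm (Fin n) => u b0 < u a0)).card := by
      rw [← hc0]
      exact Nat.mul_div_cancel_left _ (by omega)
    have r5 : n ! / i = m * (univ.filter (fun u : Perm (Fin n) =>
        (∀ q ∈ tail, u q < u a0) ∧ (∀ q ∈ front, u b0 < u q))).card := by
      rw [show n ! = i * (m * (univ.filter (fun u : Perm (Fin n) =>
        (∀ q ∈ tail, u q < u a0) ∧ (∀ q ∈ front, u b0 < u q))).card) by rw [← hd]; ring]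
      exact Nat.mul_div_cancel_left _ (by omega)
    have r6 : n ! / m = i * (univ.filter (fun u : Perm (Fin n) =>
        (∀ q ∈ tail, u q < u a0) ∧ (∀ q ∈ front, u b0 < u q))).card := by
      rw [show n ! = m * (i * (univ.filter (fun u : Perm (Fin n) =>
        (∀ q ∈ tail, u q < u a0) ∧ (∀ q ∈ front, u b0 < u q))).card) by rw [← hd]; ring]
      exact Nat.mul_div_cancel_left _ (by omega)
    have r7 : n - 1 - i = m - 1 := by omega
    rw [q1, r1, r2, r3, r4, r5, r6, r7]
    -- name the counts
    set NN := (univ.filter fun u : Perm (Fin n) =>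
        (u b0 < u a0 ∧ (∃ q : Fin n, m + 1 ≤ (q : ℕ) ∧ u a0 < u q)) ∧
        (∃ q : Fin n, (q : ℕ) ≤ m - 2 ∧ u q < u b0)).card with hNN
    set cC := (univ.filter (fun u : Perm (Fin n) => u b0 < u a0)).card with hcCd
    set cCA := (univ.filter fun u : Perm (Fin n) =>
        u b0 < u a0 ∧ (∃ q : Fin n, m + 1 ≤ (q : ℕ) ∧ u a0 < u q)).card with hcCAd
    set c1 := (univ.filter (fun u : Perm (Fin n) => ∀ x ∈ P1, x ≠ a0 → u x < u a0)).card with hc1d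
    set cY := (univ.filter fun u : Perm (Fin n) =>
        (u b0 < u a0 ∧ (∃ q : Fin n, m + 1 ≤ (q : ℕ) ∧ u a0 < u q)) ∧
        ¬ (∃ q : Fin n, (q : ℕ) ≤ m - 2 ∧ u q < u b0)).card with hcYd
    set c2 := (univ.filter (fun u : Perm (Fin n) => ∀ x ∈ P2, x ≠ b0 → u b0 < u x)).card with hc2d
    set cX := (univ.filter fun u : Perm (Fin n) =>
        ((∀ q ∈ tail, u q < u a0) ∧ (∀ q ∈ front, u b0 < u q)) ∧ u b0 < u a0).card with hcXd
    set cD := (univ.filter (fun u : Perm (Fin n) =>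
        (∀ q ∈ tail, u q < u a0) ∧ (∀ q ∈ front, u b0 < u q))).card with hcDd
    -- integer arithmetic
    have hine : ((i : ℤ) * ((i : ℤ) + 1)) ≠ 0 := by
      have h0 : (0 : ℤ) < (i : ℤ) := by exact_mod_cast (show 0 < i by omega)
      have h1 : (0 : ℤ) < (i : ℤ) + 1 := by linarith
      exact ne_of_gt (mul_pos h0 h1)
    have hmne : ((m : ℤ) * ((m : ℤ) + 1)) ≠ 0 := by
      have h0 : (0 : ℤ) < (m : ℤ) := by exact_mod_cast (show 0 < m by omega)
      have h1 : (0 : ℤ) < (m : ℤ) + 1 := by linarith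
      exact ne_of_gt (mul_pos h0 h1)
    have hc1' : ((i : ℤ) + 1) * c1 = (n ! : ℤ) := by exact_mod_cast hc1
    have hc2' : ((m : ℤ) + 1) * c2 = (n ! : ℤ) := by exact_mod_cast hc2
    have hd' : (i : ℤ) * (m : ℤ) * cD = (n ! : ℤ) := by exact_mod_cast hd
    have hwi0 : (n ! : ℤ) = (i : ℤ) * ((i : ℤ) + 1) * wi := by exact_mod_cast hwi
    have hwm0 : (n ! : ℤ) = (m : ℤ) * ((m : ℤ) + 1) * wm := by exact_mod_cast hwm
    have hwi' : (wi : ℤ) = (m : ℤ) * cD - c1 := by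
      apply mul_left_cancel₀ hine
      linear_combination (-1 : ℤ) * hwi0 + (i : ℤ) * hc1' - ((i : ℤ) + 1) * hd'
    have hwm' : (wm : ℤ) = (i : ℤ) * cD - c2 := by
      apply mul_left_cancel₀ hmne
      linear_combination (-1 : ℤ) * hwm0 + (m : ℤ) * hc2' - ((m : ℤ) + 1) * hd'
    have hA1' : (cCA : ℤ) + c1 = cC := by exact_mod_cast hA1
    have hA2' : (NN : ℤ) + cY = cCA := by exact_mod_cast hA2
    have hA3' : (cY : ℤ) + cX = c2 := by exact_mod_cast hA3
    have hA4' : (cX : ℤ) + ((i - 1)! * (m - 1)! : ℕ) = cD := by exact_mod_cast hA4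
    push_cast
    push_cast at hA4'
    linarith [hwi', hwm', hA1', hA2', hA3', hA4']
end
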